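/- Let n ≥ 1, let Ω ⊆ ℝⁿ be a bounded domain whose boundary is of class C^{2,α} for some 0 < α < 1, let f : cl Ω → ℝ be continuous with f > 0 on cl Ω, and let φ ∈ C²(cl Ω) satisfy −Δφ = f in Ω, φ > 0 in Ω, and φ = 0 on ∂Ω. Set M = max_{cl Ω} φ, R = (|Ω|/α_n)^{1/n}, and for a ∈ [0,M] set ρ(a) = (|{x ∈ Ω : φ(x) > a}|/α_n)^{1/n}. Then: (i) for every a ∈ (0,M], the level set {x ∈ Ω : φ(x) = a} has n-dimensional Lebesgue measure zero; (ii) ρ is a continuous, strictly decreasing bijection from [0,M] onto [0,R], with ρ(0) = R and ρ(M) = 0. -/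

import Mathlib

open MeasureTheory Set
open scoped RealInnerProductSpace

noncomputable section

/-- Euclidean space ℝⁿ. -/
abbrev Euc (n : ℕ) := EuclideanSpace ℝ (Fin n)

/-- The Laplacian of a scalar function on ℝⁿ, as the sum of the second
partial derivatives in the coordinate directions. -/
def lap {n : ℕ} (φ : Euc n → ℝ) (x : Euc n) : ℝ :=
  ∑ i : Fin n,
    iteratedFDeriv ℝ 2 φ x ![EuclideanSpace.single i 1, EuclideanSpace.single i 1]

/-- The unit radial vector field `e_r(x) = x / |x|` (with value `0` at `x = 0`). -/
def eRad {n : ℕ} (x : Euc n) : Euc n := ‖x‖⁻¹ • x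

/-- `Ω` is a bounded domain of ℝⁿ whose boundary is of class `C^{2,α}`:
`Ω` is open, connected and bounded, and near each boundary point, `Ω` and its
boundary are the sublevel and level set of a `C²` defining function with
nonvanishing differential whose second derivative is `α`-Hölder continuous. -/
def IsC2AlphaDomain {n : ℕ} (Ω : Set (Euc n)) (α : ℝ) : Prop :=
  IsOpen Ω ∧ IsConnected Ω ∧ Bornology.IsBounded Ω ∧
  ∀ x ∈ frontier Ω, ∃ (U : Set (Euc n)) (F : Euc n → ℝ),
    IsOpen U ∧ x ∈ U ∧ ContDiffOn ℝ 2 F U ∧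
    (∀ y ∈ U, fderivWithin ℝ F U y ≠ 0) ∧
    (U ∩ Ω = U ∩ {y | F y < 0}) ∧
    (U ∩ frontier Ω = U ∩ {y | F y = 0}) ∧
    ∃ C : ℝ, 0 ≤ C ∧ ∀ y ∈ U, ∀ z ∈ U,
      ‖iteratedFDerivWithin ℝ 2 F U y - iteratedFDerivWithin ℝ 2 F U z‖ ≤ C * ‖y - z‖ ^ α

/-- `(lam, φ)` is a principal eigenpair for `−Δ + v·∇` on `Ω` with Dirichlet
boundary condition: `φ ∈ C¹(cl Ω) ∩ C²(Ω)`, `φ > 0` in `Ω`, `φ = 0` on `∂Ω`,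
`sup_Ω φ = 1`, and `−Δφ + v·∇φ = lam φ` almost everywhere in `Ω`. -/
def IsPrincipalEigenpair {n : ℕ} (Ω : Set (Euc n)) (v : Euc n → Euc n)
    (lam : ℝ) (φ : Euc n → ℝ) : Prop :=
  ContDiffOn ℝ 1 φ (closure Ω) ∧ ContDiffOn ℝ 2 φ Ω ∧
  (∀ x ∈ Ω, 0 < φ x) ∧ (∀ x ∈ frontier Ω, φ x = 0) ∧
  sSup (φ '' Ω) = 1 ∧
  (∀ᵐ x ∂(volume.restrict Ω), -lap φ x + ⟪v x, gradient φ x⟫ = lam * φ x)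

/-- `(lam, φ)` is a `τ`-minimal eigenpair for `Ω`: `φ ∈ C²(cl Ω)`, `φ > 0` in `Ω`,
`φ = 0` on `∂Ω`, `sup_Ω φ = 1`, and `−Δφ − τ|∇φ| = lam φ` everywhere in `Ω`. -/
def IsMinEigenpair {n : ℕ} (Ω : Set (Euc n)) (τ lam : ℝ) (φ : Euc n → ℝ) : Prop :=
  ContDiffOn ℝ 2 φ (closure Ω) ∧
  (∀ x ∈ Ω, 0 < φ x) ∧ (∀ x ∈ frontier Ω, φ x = 0) ∧
  sSup (φ '' Ω) = 1 ∧
  ∀ x ∈ Ω, -lap φ x - τ * ‖gradient φ x‖ = lam * φ x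

/-- `(lam, φ)` is a `τ`-maximal eigenpair for `Ω`: `φ ∈ C²(cl Ω)`, `φ > 0` in `Ω`,
`φ = 0` on `∂Ω`, `sup_Ω φ = 1`, and `−Δφ + τ|∇φ| = lam φ` everywhere in `Ω`. -/
def IsMaxEigenpair {n : ℕ} (Ω : Set (Euc n)) (τ lam : ℝ) (φ : Euc n → ℝ) : Prop :=
  ContDiffOn ℝ 2 φ (closure Ω) ∧
  (∀ x ∈ Ω, 0 < φ x) ∧ (∀ x ∈ frontier Ω, φ x = 0) ∧
  sSup (φ '' Ω) = 1 ∧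
  ∀ x ∈ Ω, -lap φ x + τ * ‖gradient φ x‖ = lam * φ x


open Filter Topology in
lemma countable_bad_1d (A : Set ℝ) (h : ℝ → ℝ) (d : ℝ → ℝ)
    (h0 : ∀ t ∈ A, h t = 0) (hd : ∀ t ∈ A, HasDerivAt h (d t) t) :
    {t ∈ A | d t ≠ 0}.Countable := by
  set B := {t ∈ A | d t ≠ 0} with hB
  rw [← Set.countable_coe_iff]
  have hdisc : DiscreteTopology B := by
    rw [discreteTopology_subtype_iff]
    intro t ht
    by_contra hne
    have hne' : (𝓝[≠] t ⊓ Filter.principal B).NeBot := ⟨hne⟩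
    have htA : t ∈ A := ht.1
    have : Tendsto (slope h t) (𝓝[≠] t) (𝓝 (d t)) :=
      (hasDerivAt_iff_tendsto_slope).1 (hd t htA)
    have h2 : Tendsto (slope h t) (𝓝[≠] t ⊓ Filter.principal B) (𝓝 (d t)) :=
      this.mono_left inf_le_left
    have h3 : Tendsto (fun _ : ℝ => (0:ℝ)) (𝓝[≠] t ⊓ Filter.principal B) (𝓝 (d t)) := by
      apply Tendsto.congr' _ h2
      filter_upwards [Filter.mem_inf_of_right (Filter.mem_principal_self B)] with s hs
      simp [slope, h0 s hs.1, h0 t htA]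
    have : (0:ℝ) = d t := tendsto_const_nhds_iff.mp h3
    exact ht.2 this.symm
  exact TopologicalSpace.separableSpace_iff_countable.mp inferInstance


open Filter Topology in
lemma fderiv_single_ae_zero {m : ℕ} (i : Fin (m + 1)) (g : Euc (m + 1) → ℝ)
    (S : Set (Euc (m + 1))) (hS : MeasurableSet S)
    (hg0 : ∀ x ∈ S, g x = 0) (hgd : ∀ x ∈ S, DifferentiableAt ℝ g x) :
    volume {x ∈ S | fderiv ℝ g x (EuclideanSpace.single i 1) ≠ 0} = 0 := by
  set v : Euc (m + 1) := EuclideanSpace.single i 1 with hv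
  set T := {x ∈ S | fderiv ℝ g x v ≠ 0} with hT
  have hTm : MeasurableSet T := by
    have : Measurable fun x => fderiv ℝ g x v := measurable_fderiv_apply_const ℝ g v
    exact hS.inter (this (measurableSet_singleton 0).compl)
  set Φ : Euc (m + 1) ≃ᵐ (Fin (m+1) → ℝ) := (MeasurableEquiv.toLp 2 (Fin (m+1) → ℝ)).symm with hΦ
  set P1 : (Fin (m+1) → ℝ) ≃ᵐ ℝ × (Fin m → ℝ) :=
    MeasurableEquiv.piFinSuccAbove (fun _ => ℝ) i with hP1
  set Ψ : Euc (m + 1) ≃ᵐ (Fin m → ℝ) × ℝ :=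
    (Φ.trans P1).trans MeasurableEquiv.prodComm with hΨdef
  have hΨ : MeasurePreserving Ψ volume volume := by
    have h1 := EuclideanSpace.volume_preserving_symm_measurableEquiv_toLp (Fin (m+1))
    have h2 := volume_preserving_piFinSuccAbove (fun _ : Fin (m+1) => ℝ) i
    have h3 : MeasurePreserving (Prod.swap : ℝ × (Fin m → ℝ) → (Fin m → ℝ) × ℝ)
        volume volume := by
      rw [Measure.volume_eq_prod, Measure.volume_eq_prod]; exact Measure.measurePreserving_swap
    exact (h3.comp h2).comp h1
  set s : Set ((Fin m → ℝ) × ℝ) := Ψ.symm ⁻¹' T with hs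
  have hsm : MeasurableSet s := Ψ.symm.measurable hTm
  have hvol : volume s = volume T :=
    (MeasurePreserving.symm Ψ hΨ).measure_preimage hTm.nullMeasurableSet
  rw [← hvol, Measure.volume_eq_prod]
  refine (Measure.measure_prod_null hsm).mpr ?_
  refine ae_of_all _ fun y => ?_
  simp only [Pi.zero_apply]
  set L : ℝ → Euc (m + 1) := fun t => Ψ.symm (y, t) with hL
  have hline : ∀ t : ℝ, L t = L 0 + t • v := by
    intro t
    ext j
    have hrepr : ∀ u : ℝ, L u
        = (WithLp.equiv 2 (Fin (m+1) → ℝ)).symm (Fin.insertNth i u y) := fun u => rfl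
    have : (L t) j = (L 0) j + t * v j := by
      rw [hrepr t, hrepr 0]
      simp only [WithLp.equiv_symm_apply, PiLp.toLp_apply]
      refine Fin.succAboveCases i ?_ ?_ j
      · simp [hv, EuclideanSpace.single_apply]
      · intro k
        simp [hv, EuclideanSpace.single_apply, Fin.succAbove_ne i k]
    simpa using this
  have hLd : ∀ t : ℝ, HasDerivAt L v t := by
    intro t
    have h1 : HasDerivAt (fun u : ℝ => L 0 + u • v) v t := by
      simpa using (((hasDerivAt_id t).smul_const v).const_add (L 0))
    exact h1.congr_of_eventuallyEq (Eventually.of_forall fun u => (hline u))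
  set A : Set ℝ := {t | L t ∈ S} with hA
  have hcnt : {t ∈ A | fderiv ℝ g (L t) v ≠ 0}.Countable := by
    refine countable_bad_1d A (fun t => g (L t)) (fun t => fderiv ℝ g (L t) v) ?_ ?_
    · exact fun t ht => hg0 (L t) ht
    · intro t ht
      exact (hgd (L t) ht).hasFDerivAt.comp_hasDerivAt t (hLd t)
  have hsl : Prod.mk y ⁻¹' s = {t ∈ A | fderiv ℝ g (L t) v ≠ 0} := rfl
  rw [hsl]
  exact hcnt.measure_zero volume


open Filter Topology in
lemma levelset_null {n : ℕ} (hn : 1 ≤ n) (Ω : Set (Euc n)) (hΩo : IsOpen Ω)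
    (φ f : Euc n → ℝ) (hφ : ContDiffOn ℝ 2 φ Ω)
    (heq : ∀ x ∈ Ω, -lap φ x = f x) (hfpos : ∀ x ∈ Ω, 0 < f x) (a : ℝ) :
    volume {x ∈ Ω | φ x = a} = 0 := by
  obtain ⟨m, rfl⟩ : ∃ m, n = m + 1 := ⟨n - 1, by omega⟩
  -- basic differentiability facts
  have hct : ∀ x ∈ Ω, ContDiffAt ℝ 2 φ x := fun x hx => hφ.contDiffAt (hΩo.mem_nhds hx)
  have hφd : ∀ x ∈ Ω, DifferentiableAt ℝ φ x := fun x hx =>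
    (hct x hx).differentiableAt (by norm_num)
  have hφd1 : ∀ x ∈ Ω, DifferentiableAt ℝ (fderiv ℝ φ) x := fun x hx =>
    ((hct x hx).fderiv_right (m := 1) (by norm_num)).differentiableAt (by norm_num)
  set v : Fin (m+1) → Euc (m+1) := fun i => EuclideanSpace.single i 1 with hv
  set g : Fin (m+1) → Euc (m+1) → ℝ := fun i x => fderiv ℝ φ x (v i) with hg
  have hgd : ∀ i, ∀ x ∈ Ω, DifferentiableAt ℝ (g i) x := by
    intro i x hx
    exact (((ContinuousLinearMap.apply ℝ ℝ (v i)).differentiable).differentiableAt).comp x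
      (hφd1 x hx)
  have hgderiv : ∀ i, ∀ x ∈ Ω,
      fderiv ℝ (g i) x (v i) = iteratedFDeriv ℝ 2 φ x ![v i, v i] := by
    intro i x hx
    have hcomp : fderiv ℝ (g i) x = (ContinuousLinearMap.apply ℝ ℝ (v i)).comp
        (fderiv ℝ (fderiv ℝ φ) x) := by
      have := fderiv_comp (𝕜 := ℝ) x
        ((ContinuousLinearMap.apply ℝ ℝ (v i)).differentiable.differentiableAt) (hφd1 x hx)
      simp [ContinuousLinearMap.fderiv] at this; exact this
    rw [iteratedFDeriv_two_apply]
    simp [hcomp]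
  -- measurability of the level set
  have hcont : ContinuousOn φ Ω := hφ.continuousOn
  set E := {x ∈ Ω | φ x = a} with hE
  have hEm : MeasurableSet E := by
    have h1 : IsOpen (Ω ∩ φ ⁻¹' (Iio a)) := hcont.isOpen_inter_preimage hΩo isOpen_Iio
    have h2 : IsOpen (Ω ∩ φ ⁻¹' (Ioi a)) := hcont.isOpen_inter_preimage hΩo isOpen_Ioi
    have : E = Ω \ ((Ω ∩ φ ⁻¹' (Iio a)) ∪ (Ω ∩ φ ⁻¹' (Ioi a))) := by
      ext x
      simp only [hE, mem_setOf_eq, mem_diff, mem_union, mem_inter_iff, mem_preimage,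
        mem_Iio, mem_Ioi]
      constructor
      · rintro ⟨hx, hfa⟩; exact ⟨hx, by rintro (⟨-, h⟩ | ⟨-, h⟩) <;> linarith⟩
      · rintro ⟨hx, hno⟩
        refine ⟨hx, ?_⟩
        by_contra hne
        rcases lt_or_gt_of_ne hne with h | h
        · exact hno (Or.inl ⟨hx, h⟩)
        · exact hno (Or.inr ⟨hx, h⟩)
    rw [this]
    exact hΩo.measurableSet.diff (h1.union h2).measurableSet
  -- step 1 : gradient vanishes a.e. on E
  have step1 : ∀ i, volume {x ∈ E | g i x ≠ 0} = 0 := by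
    intro i
    have h0 : ∀ x ∈ E, φ x - a = 0 := fun x hx => by rw [hx.2]; ring
    have hd : ∀ x ∈ E, DifferentiableAt ℝ (fun y => φ y - a) x := fun x hx =>
      (hφd x hx.1).sub_const a
    have := fderiv_single_ae_zero i (fun y => φ y - a) E hEm h0 hd
    have heqd : ∀ x ∈ E, fderiv ℝ (fun y => φ y - a) x (v i) = g i x := by
      intro x hx
      rw [fderiv_sub_const]
    refine measure_mono_null ?_ this
    intro x hx
    exact ⟨hx.1, by rw [heqd x hx.1]; exact hx.2⟩
  -- step 2 : second derivative vanishes a.e. on {g i = 0} ∩ Ω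
  set Z : Fin (m+1) → Set (Euc (m+1)) := fun i => {x ∈ Ω | g i x = 0} with hZ
  have hZm : ∀ i, MeasurableSet (Z i) := by
    intro i
    have : Measurable (g i) := measurable_fderiv_apply_const ℝ φ (v i)
    exact hΩo.measurableSet.inter (this (measurableSet_singleton 0))
  have step2 : ∀ i, volume {x ∈ Z i | fderiv ℝ (g i) x (v i) ≠ 0} = 0 := by
    intro i
    exact fderiv_single_ae_zero i (g i) (Z i) (hZm i) (fun x hx => hx.2)
      (fun x hx => hgd i x hx.1)
  -- combine
  set bad := (⋃ i, {x ∈ E | g i x ≠ 0}) ∪ ⋃ i, {x ∈ Z i | fderiv ℝ (g i) x (v i) ≠ 0}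
    with hbad
  have hbadnull : volume bad = 0 := by
    rw [hbad]
    exact measure_union_null (measure_iUnion_null fun i => step1 i)
      (measure_iUnion_null fun i => step2 i)
  have hsub : E ⊆ bad := by
    intro x hx
    by_contra hxb
    simp only [hbad, mem_union, mem_iUnion, mem_setOf_eq, not_or, not_exists] at hxb
    obtain ⟨hb1, hb2⟩ := hxb
    have hxΩ : x ∈ Ω := hx.1
    have hgz : ∀ i, g i x = 0 := by
      intro i
      by_contra hne
      exact hb1 i ⟨hx, hne⟩
    have hhz : ∀ i, fderiv ℝ (g i) x (v i) = 0 := by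
      intro i
      by_contra hne
      exact hb2 i ⟨⟨hxΩ, hgz i⟩, hne⟩
    have hlap : lap φ x = 0 := by
      unfold lap
      rw [Finset.sum_eq_zero]
      intro i _
      rw [← hgderiv i x hxΩ, hhz i]
    have := heq x hxΩ
    rw [hlap] at this
    have := hfpos x hxΩ
    linarith
  exact measure_mono_null hsub hbadnull


/-- Level sets of a positive solution of `−Δφ = f > 0` are null, and the
rearrangement radius function `ρ` is a continuous decreasing bijection. -/
theorem level_set_null_and_rho_bijective {n : ℕ} (hn : 1 ≤ n)
    (Ω : Set (Euc n)) (α : ℝ) (hα₀ : 0 < α) (hα₁ : α < 1)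
    (hΩ : IsC2AlphaDomain Ω α)
    (f : Euc n → ℝ) (hf : ContinuousOn f (closure Ω))
    (hfpos : ∀ x ∈ closure Ω, 0 < f x)
    (φ : Euc n → ℝ) (hφ : ContDiffOn ℝ 2 φ (closure Ω))
    (heq : ∀ x ∈ Ω, -lap φ x = f x)
    (hφpos : ∀ x ∈ Ω, 0 < φ x) (hφ0 : ∀ x ∈ frontier Ω, φ x = 0)
    (M : ℝ) (hM : IsGreatest (φ '' closure Ω) M)
    (R : ℝ) (hR : R = ((volume Ω).toReal
      / (volume (Metric.ball (0 : Euc n) 1)).toReal) ^ ((1 : ℝ) / n))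
    (ρ : ℝ → ℝ)
    (hρ : ∀ a, ρ a = ((volume {x ∈ Ω | a < φ x}).toReal
      / (volume (Metric.ball (0 : Euc n) 1)).toReal) ^ ((1 : ℝ) / n)) :
    (∀ a ∈ Set.Ioc 0 M, volume {x ∈ Ω | φ x = a} = 0) ∧
    ContinuousOn ρ (Set.Icc 0 M) ∧
    StrictAntiOn ρ (Set.Icc 0 M) ∧
    Set.BijOn ρ (Set.Icc 0 M) (Set.Icc 0 R) ∧
    ρ 0 = R ∧ ρ M = 0 := by
  obtain ⟨hΩo, hΩconn, hΩbdd, -⟩ := hΩ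
  haveI : Nonempty (Fin n) := Fin.pos_iff_nonempty.mp (by omega)
  have h1n : 0 < (1 : ℝ) / n := by positivity
  -- part 1 (for all real a)
  have part1 : ∀ a : ℝ, volume {x ∈ Ω | φ x = a} = 0 := fun a =>
    levelset_null hn Ω hΩo φ f (hφ.mono subset_closure) heq
      (fun x hx => hfpos x (subset_closure hx)) a
  -- basic constants
  set κ : ℝ := (volume (Metric.ball (0 : Euc n) 1)).toReal with hκ
  have hκpos : 0 < κ :=
    ENNReal.toReal_pos (Metric.measure_ball_pos volume 0 one_pos).ne' measure_ball_lt_top.ne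
  set μ : ℝ → ENNReal := fun a => volume {x ∈ Ω | a < φ x} with hμ
  have hΩfin : volume Ω ≠ ⊤ := hΩbdd.measure_lt_top.ne
  have hμfin : ∀ a, μ a ≠ ⊤ := fun a =>
    (lt_of_le_of_lt (measure_mono fun x hx => hx.1) hΩbdd.measure_lt_top).ne
  have hρ' : ∀ a, ρ a = ((μ a).toReal / κ) ^ ((1:ℝ)/n) := fun a => hρ a
  -- continuity of φ on various sets
  have hφcl : ContinuousOn φ (closure Ω) := hφ.continuousOn
  have hφΩ : ContinuousOn φ Ω := hφcl.mono subset_closure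
  have hΩne : Ω.Nonempty := hΩconn.nonempty
  -- M values
  have hMub : ∀ x ∈ closure Ω, φ x ≤ M := fun x hx => hM.2 ⟨x, hx, rfl⟩
  obtain ⟨x₀, hx₀⟩ := hΩconn.nonempty
  have hMpos : 0 < M := lt_of_lt_of_le (hφpos x₀ hx₀) (hMub x₀ (subset_closure hx₀))
  -- a boundary point
  have hfr : (frontier Ω).Nonempty := by
    by_contra hemp
    rw [Set.not_nonempty_iff_eq_empty] at hemp
    have hclopen : IsClopen Ω := isClopen_iff_frontier_eq_empty.mpr hemp
    rcases isClopen_iff.mp hclopen with h | h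
    · exact absurd h (Set.nonempty_iff_ne_empty.mp hΩne)
    · obtain ⟨r, hr⟩ := hΩbdd.subset_closedBall 0
      have : EuclideanSpace.single (Classical.arbitrary (Fin n)) (r + 1) ∈ Ω := by
        rw [h]; trivial
      have := hr this
      rw [Metric.mem_closedBall, dist_zero_right, EuclideanSpace.norm_single] at this
      have : |r + 1| ≤ r := this
      rcases abs_le.mp this with ⟨h1, h2⟩
      linarith
  obtain ⟨z, hz⟩ := hfr
  have hzcl : z ∈ closure Ω := frontier_subset_closure hz
  have hz0 : φ z = 0 := hφ0 z hz
  obtain ⟨w, hwcl, hwM⟩ := hM.1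
  -- intermediate values
  have hIVT : ∀ c ∈ Icc (0:ℝ) M, ∃ x ∈ closure Ω, φ x = c := by
    intro c hc
    have hpc : IsPreconnected (closure Ω) := hΩconn.closure.isPreconnected
    have := hpc.intermediate_value hzcl hwcl hφcl
    rw [hz0, hwM] at this
    obtain ⟨x, hx, hxc⟩ := this hc
    exact ⟨x, hx, hxc⟩
  -- strict monotonicity of μ
  have hμstrict : ∀ a b : ℝ, 0 ≤ a → a < b → b ≤ M → μ b < μ a := by
    intro a b ha hab hbM
    set c := (a + b) / 2 with hc
    have hac : a < c := by rw [hc]; linarith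
    have hcb : c < b := by rw [hc]; linarith
    obtain ⟨x, hxcl, hxc⟩ := hIVT c ⟨by linarith, by linarith⟩
    have hxΩ : x ∈ Ω := by
      rcases (closure_eq_self_union_frontier Ω ▸ hxcl) with h | h
      · exact h
      · exfalso; have := hφ0 x h; rw [hxc] at this; linarith
    set D := Ω ∩ φ ⁻¹' (Ioo a b) with hD
    have hDopen : IsOpen D := hφΩ.isOpen_inter_preimage hΩo isOpen_Ioo
    have hDpos : 0 < volume D :=
      hDopen.measure_pos volume ⟨x, hxΩ, by simp [hxc]; exact ⟨hac, hcb⟩⟩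
    have hdisj : Disjoint {x ∈ Ω | b < φ x} D := by
      rw [Set.disjoint_left]
      rintro y ⟨-, hy2⟩ ⟨-, hy4⟩
      exact absurd hy4.2 (not_lt.mpr (le_of_lt hy2))
    have hsub : {x ∈ Ω | b < φ x} ∪ D ⊆ {x ∈ Ω | a < φ x} := by
      rintro y (⟨h1, h2⟩ | ⟨h1, h2⟩)
      · exact ⟨h1, by linarith⟩
      · exact ⟨h1, h2.1⟩
    calc μ b < μ b + volume D := ENNReal.lt_add_right (hμfin b) hDpos.ne'
    _ = volume ({x ∈ Ω | b < φ x} ∪ D) := (measure_union hdisj hDopen.measurableSet).symm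
    _ ≤ μ a := measure_mono hsub
  -- strict antitonicity of ρ
  have hanti : StrictAntiOn ρ (Icc 0 M) := by
    intro a ha b hb hab
    rw [hρ' a, hρ' b]
    have h1 : μ b < μ a := hμstrict a b ha.1 hab hb.2
    have h2 : (μ b).toReal < (μ a).toReal :=
      (ENNReal.toReal_lt_toReal (hμfin b) (hμfin a)).mpr h1
    exact Real.rpow_lt_rpow (by positivity) (by apply div_lt_div_of_pos_right h2 hκpos) h1n
  -- endpoint values
  have hρ0 : ρ 0 = R := by
    have hset : {x ∈ Ω | 0 < φ x} = Ω := by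
      ext x
      simp only [mem_setOf_eq]
      exact ⟨fun h => h.1, fun h => ⟨h, hφpos x h⟩⟩
    have hμ0 : μ 0 = volume Ω := by
      show volume {x ∈ Ω | 0 < φ x} = volume Ω
      rw [hset]
    rw [hρ' 0, hμ0, hR, hκ]
  have hρM : ρ M = 0 := by
    have : {x ∈ Ω | M < φ x} = ∅ := by
      ext x
      simp only [mem_setOf_eq, mem_empty_iff_false, iff_false, not_and, not_lt]
      exact fun hx => hMub x (subset_closure hx)
    rw [hρ' M, hμ]
    simp only [this, measure_empty, ENNReal.toReal_zero, zero_div]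
    exact Real.zero_rpow h1n.ne'
  -- continuity
  have hcont : ContinuousOn ρ (Icc 0 M) := by
    intro a ha
    have hμten : Filter.Tendsto μ (nhdsWithin a (Icc 0 M)) (nhds (μ a)) := by
      apply tendsto_measure_of_ae_tendsto_indicator (A := {x ∈ Ω | a < φ x})
        (As := fun b => {x ∈ Ω | b < φ x}) _ ?_ ?_ hΩo.measurableSet hΩfin
        (Filter.Eventually.of_forall fun b => fun x hx => hx.1) ?_
      · exact (hφΩ.isOpen_inter_preimage hΩo isOpen_Ioi).measurableSet
      · exact fun b => (hφΩ.isOpen_inter_preimage hΩo isOpen_Ioi).measurableSet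
      · have hN := part1 a
        filter_upwards [measure_eq_zero_iff_ae_notMem.mp hN] with x hxN
        by_cases hxΩ : x ∈ Ω
        · have hne : φ x ≠ a := fun h => hxN ⟨hxΩ, h⟩
          rcases lt_or_gt_of_ne hne with h | h
          · -- φ x < a : eventually b > φ x, both sides false
            have := eventually_gt_nhds h
            filter_upwards [nhdsWithin_le_nhds this] with b hb
            constructor
            · rintro ⟨-, h2⟩; exact absurd h2 (not_lt.mpr (le_of_lt hb))
            · rintro ⟨-, h2⟩; exact absurd h2 (not_lt.mpr (le_of_lt h))
          · -- a < φ x : eventually b < φ x, both sides true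
            have := eventually_lt_nhds h
            filter_upwards [nhdsWithin_le_nhds this] with b hb
            exact ⟨fun _ => ⟨hxΩ, h⟩, fun _ => ⟨hxΩ, hb⟩⟩
        · refine Filter.Eventually.of_forall fun b => ?_
          exact ⟨fun h => absurd h.1 hxΩ, fun h => absurd h.1 hxΩ⟩
    have h2 : Filter.Tendsto (fun b => (μ b).toReal) (nhdsWithin a (Icc 0 M))
        (nhds ((μ a).toReal)) := (ENNReal.tendsto_toReal (hμfin a)).comp hμten
    have h3 : Filter.Tendsto (fun b => (μ b).toReal / κ) (nhdsWithin a (Icc 0 M))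
        (nhds ((μ a).toReal / κ)) := h2.div_const κ
    have h4 := (Real.continuousAt_rpow_const ((μ a).toReal / κ) ((1:ℝ)/n)
      (Or.inr h1n.le)).tendsto.comp h3
    have : Filter.Tendsto ρ (nhdsWithin a (Icc 0 M)) (nhds (ρ a)) := by
      rw [hρ' a]
      exact h4.congr fun b => (hρ' b).symm
    exact this
  -- bijectivity
  have hmaps : Set.MapsTo ρ (Icc 0 M) (Icc 0 R) := by
    intro a ha
    constructor
    · rw [hρ' a]; exact Real.rpow_nonneg (by positivity) _
    · rw [← hρ0]
      rcases eq_or_lt_of_le ha.1 with h | h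
      · rw [← h]
      · exact le_of_lt (hanti (left_mem_Icc.mpr hMpos.le) ha h)
  have hsurj : Set.SurjOn ρ (Icc 0 M) (Icc 0 R) := by
    have := intermediate_value_Icc' hMpos.le hcont
    rw [hρ0, hρM] at this
    exact this
  exact ⟨fun a _ => part1 a, hcont, hanti, ⟨hmaps, hanti.injOn, hsurj⟩, hρ0, hρM⟩
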